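/- Let t be even and let u ∈ M_t(ℂ) be a self-adjoint unitary (u = u*, u² = 1) whose +1-eigenspace has dimension strictly greater than t/2. Let f ∈ M_t(ℂ) be an orthogonal projection of rank t/2. Then ‖u f u* − (1 − f)‖ ≥ 1. -/

import Mathlib

theorem stmt_16 (t : ℕ) (ht : Even t) (u f : Matrix (Fin t) (Fin t) ℂ)
    (hu_sa : u.conjTranspose = u) (hu_unit : u * u = 1)
    (heig : t / 2 < Module.finrank ℂ (Module.End.eigenspace (Matrix.toLin' u) 1))
    (hf_proj : f * f = f) (hf_sa : f.conjTranspose = f) (hf_rank : f.rank = t / 2) :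
    1 ≤ ‖Matrix.toEuclideanCLM (𝕜 := ℂ) (n := Fin t) (u * f * u.conjTranspose - (1 - f))‖ := by
  set V : Submodule ℂ (Fin t → ℂ) := LinearMap.range f.mulVecLin with hV
  set W : Submodule ℂ (Fin t → ℂ) := Module.End.eigenspace (Matrix.toLin' u) 1 with hW
  -- intersection is nontrivial
  have hdim : Module.finrank ℂ (Fin t → ℂ) < Module.finrank ℂ V + Module.finrank ℂ W := by
    have h1 : Module.finrank ℂ V = t / 2 := hf_rank
    have h2 : Module.finrank ℂ (Fin t → ℂ) = t := by simp
    obtain ⟨k, hk⟩ := ht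
    omega
  have hinter : V ⊓ W ≠ ⊥ := by
    intro hbot
    have := Submodule.finrank_sup_add_finrank_inf_eq V W
    rw [hbot] at this
    simp only [finrank_bot, add_zero] at this
    have hle : Module.finrank ℂ ↥(V ⊔ W) ≤ Module.finrank ℂ (Fin t → ℂ) :=
      Submodule.finrank_le _
    omega
  obtain ⟨ξ, hξmem, hξ0⟩ := Submodule.exists_mem_ne_zero_of_ne_bot hinter
  obtain ⟨hξV, hξW⟩ := hξmem
  -- f ξ = ξ
  have hfξ : f.mulVec ξ = ξ := by
    obtain ⟨x, hx⟩ := hξV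
    rw [Matrix.mulVecLin_apply] at hx
    rw [← hx, Matrix.mulVec_mulVec, hf_proj]
  -- u ξ = ξ
  have huξ : u.mulVec ξ = ξ := by
    have := Module.End.mem_eigenspace_iff.mp hξW
    simpa [Matrix.toLin'_apply] using this
  have hfξ' : f.mulVec ξ = ξ := hfξ
  -- the matrix sends ξ to ξ
  have hMξ : (u * f * u.conjTranspose - (1 - f)).mulVec ξ = ξ := by
    rw [hu_sa]
    simp only [Matrix.sub_mulVec, ← Matrix.mulVec_mulVec, Matrix.one_mulVec, huξ, hfξ]
    simp
  -- conclude on norms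
  set T := Matrix.toEuclideanCLM (𝕜 := ℂ) (n := Fin t) (u * f * u.conjTranspose - (1 - f))
  set ξ' : EuclideanSpace ℂ (Fin t) := (WithLp.equiv 2 _).symm ξ
  have hTξ : T ξ' = ξ' := by
    show T ((WithLp.equiv 2 _).symm ξ) = _
    exact congrArg (WithLp.toLp 2) hMξ
  have hξ'0 : ξ' ≠ 0 := by
    simpa [ξ', WithLp.equiv] using hξ0
  have hnorm : ‖ξ'‖ ≤ ‖T‖ * ‖ξ'‖ := by
    calc ‖ξ'‖ = ‖T ξ'‖ := by rw [hTξ]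
    _ ≤ ‖T‖ * ‖ξ'‖ := T.le_opNorm ξ'
  have hpos : (0:ℝ) < ‖ξ'‖ := norm_pos_iff.mpr hξ'0
  nlinarith
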